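/- Let n ∈ ℕ, ω ∈ (0, (n+1)π), and let r ∈ 𝒰_n be the unitary best approximation to e^{iωx}, with unique phase function g (max_{x∈[−1,1]} |g(x) − ωx| < π) and equioscillation points −1 = η_1 < ⋯ < η_{2n+2} = 1. Then: |r(iη_j) − e^{iωη_j}| = ‖r − exp(ω·)‖ for j = 1,…,2n+2, and the equioscillation points are exactly the points of [−1,1] at which |r(ix) − e^{iωx}| and |g(x) − ωx| attain their maxima; the phase error g(x) − ωx is strictly monotonic between neighboring equioscillation points; and for each j = 1,…,2n+1 the phase error has exactly one zero x_j in the open interval (η_j, η_{j+1}), this zero is simple, and r interpolates the exponential there: r(i x_j) = e^{iω x_j}. -/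

import Mathlib

open Polynomial

noncomputable section

/-- `p†(z) := conj(p)(−z)`: conjugate the coefficients of `p` and substitute `−z`. -/
def pdag (p : Polynomial ℂ) : Polynomial ℂ :=
  (p.map (starRingEnd ℂ)).comp (-Polynomial.X)

/-- `𝒰 n`: the unitary rational functions of degree `(n,n)`, i.e. rational functions
of the form `p†/p` with `p` a nonzero complex polynomial of degree at most `n`. -/
def unitaryClass (n : ℕ) : Set (RatFunc ℂ) :=
  {r | ∃ p : Polynomial ℂ, p ≠ 0 ∧ p.natDegree ≤ n ∧ r = RatFunc.mk (pdag p) p}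

/-- Evaluation of a rational function at the imaginary point `i·x`. -/
def ieval (r : RatFunc ℂ) (x : ℝ) : ℂ :=
  RatFunc.eval (RingHom.id ℂ) (Complex.I * (x : ℂ)) r

/-- The uniform approximation error `‖r − exp(ω·)‖ = sup_{x∈[−1,1]} |r(ix) − e^{iωx}|`. -/
def errNorm (ω : ℝ) (r : RatFunc ℂ) : ℝ :=
  sSup ((fun x : ℝ => ‖ieval r x - Complex.exp (Complex.I * ω * x)‖) ''
    Set.Icc (-1 : ℝ) 1)

/-- The maximal phase error `max_{x∈[−1,1]} |g(x) − ωx|`. -/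
def phaseErrSup (ω : ℝ) (g : ℝ → ℝ) : ℝ :=
  sSup ((fun x : ℝ => |g x - ω * x|) '' Set.Icc (-1 : ℝ) 1)

/-- `g` is a phase function for `r ∈ 𝒰 n`: for some `m ≤ n`, `θ ∈ ℝ` and poles
`s j = ξ j + i μ j` with `ξ j ≠ 0`, `r` has the product representation
`r(z) = (−1)^m e^{iθ} ∏ (z + conj s_j)/(z − s_j)` and
`g(x) = θ + 2 Σ_j arctan((x − μ j)/ξ j)` with `r(ix) = e^{i g(x)}`. -/
def IsPhaseFun (n : ℕ) (r : RatFunc ℂ) (g : ℝ → ℝ) : Prop :=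
  ∃ (m : ℕ) (θ : ℝ) (μ ξ : Fin m → ℝ), m ≤ n ∧ (∀ j, ξ j ≠ 0) ∧
    r = RatFunc.mk
      (Polynomial.C ((-1 : ℂ) ^ m * Complex.exp (θ * Complex.I)) *
        ∏ j, (Polynomial.X + Polynomial.C (starRingEnd ℂ ((ξ j : ℂ) + (μ j : ℂ) * Complex.I))))
      (∏ j, (Polynomial.X - Polynomial.C ((ξ j : ℂ) + (μ j : ℂ) * Complex.I))) ∧
    (∀ x : ℝ, g x = θ + 2 * ∑ j, Real.arctan ((x - μ j) / ξ j)) ∧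
    (∀ x : ℝ, ieval r x = Complex.exp (Complex.I * g x))

/-- The phase error of `g` equioscillates between `m` points in `[−1,1]`. -/
def EquiOsc (ω : ℝ) (g : ℝ → ℝ) (m : ℕ) : Prop :=
  ∃ (η : Fin m → ℝ) (ε : ℝ), StrictMono η ∧ (∀ j, η j ∈ Set.Icc (-1 : ℝ) 1) ∧
    (ε = 1 ∨ ε = -1) ∧
    ∀ j : Fin m, g (η j) - ω * η j = ε * (-1 : ℝ) ^ (j : ℕ) * phaseErrSup ω g

end

section Aux

open Polynomial Real Set

namespace BestApproxAux


lemma abs_exp_sub_exp (a b : ℝ) :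
    ‖Complex.exp (Complex.I * a) - Complex.exp (Complex.I * b)‖
      = 2 * |Real.sin ((a - b) / 2)| := by
  have ha : Complex.I * (a : ℂ) = (a : ℂ) * Complex.I := mul_comm _ _
  have hb : Complex.I * (b : ℂ) = (b : ℂ) * Complex.I := mul_comm _ _
  rw [ha, hb, Complex.exp_mul_I, Complex.exp_mul_I]
  have h1 : (Complex.cos a + Complex.sin a * Complex.I)
      - (Complex.cos b + Complex.sin b * Complex.I)
      = ((Real.cos a - Real.cos b : ℝ) : ℂ) + ((Real.sin a - Real.sin b : ℝ) : ℂ) * Complex.I := by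
    rw [← Complex.ofReal_cos, ← Complex.ofReal_cos, ← Complex.ofReal_sin, ← Complex.ofReal_sin]
    push_cast; ring
  rw [h1, Complex.norm_def, Complex.normSq_add_mul_I]
  have key : (Real.cos a - Real.cos b) ^ 2 + (Real.sin a - Real.sin b) ^ 2
      = (2 * |Real.sin ((a - b) / 2)|) ^ 2 := by
    have h2 : Real.cos (2 * ((a - b) / 2)) = 2 * Real.cos ((a - b) / 2) ^ 2 - 1 :=
      Real.cos_two_mul _
    have h3 : (2 : ℝ) * ((a - b) / 2) = a - b := by ring
    rw [h3] at h2
    have h4 := Real.sin_sq_add_cos_sq ((a - b) / 2)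
    have h5 := Real.sin_sq_add_cos_sq a
    have h6 := Real.sin_sq_add_cos_sq b
    have h7 : Real.cos (a - b) = Real.cos a * Real.cos b + Real.sin a * Real.sin b :=
      Real.cos_sub a b
    have h8 : |Real.sin ((a - b) / 2)| ^ 2 = Real.sin ((a - b) / 2) ^ 2 := sq_abs _
    nlinarith [h2, h4, h5, h6, h7, h8]
  rw [key, Real.sqrt_sq (by positivity)]

noncomputable def Qp (μ ξ : ℝ) : Polynomial ℝ := (X - C μ) ^ 2 + C (ξ ^ 2)

lemma Qp_monic (μ ξ : ℝ) : (Qp μ ξ).Monic := by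
  apply Polynomial.Monic.add_of_left ((monic_X_sub_C μ).pow 2)
  have h2 : ((X - C μ : ℝ[X]) ^ 2).degree = 2 := by
    rw [degree_pow, degree_X_sub_C]; rfl
  rw [h2]
  exact lt_of_le_of_lt degree_C_le (by norm_num)

lemma Qp_natDegree (μ ξ : ℝ) : (Qp μ ξ).natDegree = 2 := by
  have h2 : ((X - C μ : ℝ[X]) ^ 2).degree = 2 := by
    rw [degree_pow, degree_X_sub_C]; rfl
  have : (Qp μ ξ).degree = 2 := by
    unfold Qp
    rw [degree_add_eq_left_of_degree_lt, h2]
    rw [h2]; exact lt_of_le_of_lt degree_C_le (by norm_num)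
  exact natDegree_eq_of_degree_eq_some this

lemma Qp_eval (μ ξ x : ℝ) : (Qp μ ξ).eval x = (x - μ) ^ 2 + ξ ^ 2 := by
  simp [Qp]

noncomputable def Pp (m : ℕ) (μ ξ : Fin m → ℝ) (ω : ℝ) : Polynomial ℝ :=
  C 2 * ∑ j, C (ξ j) * ∏ k ∈ Finset.univ.erase j, Qp (μ k) (ξ k)
    - C ω * ∏ j, Qp (μ j) (ξ j)

lemma Pp_eval (m : ℕ) (μ ξ : Fin m → ℝ) (ω : ℝ) (hξ : ∀ j, ξ j ≠ 0) (x : ℝ) :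
    (Pp m μ ξ ω).eval x
      = (2 * ∑ j, ξ j / ((x - μ j) ^ 2 + ξ j ^ 2) - ω)
        * ∏ j, ((x - μ j) ^ 2 + ξ j ^ 2) := by
  have hq : ∀ j, ((x - μ j) ^ 2 + ξ j ^ 2) ≠ 0 := by
    intro j
    have := hξ j
    positivity
  have key : (∑ j, ξ j / ((x - μ j) ^ 2 + ξ j ^ 2)) * ∏ j, ((x - μ j) ^ 2 + ξ j ^ 2)
      = ∑ j, ξ j * ∏ k ∈ Finset.univ.erase j, ((x - μ k) ^ 2 + ξ k ^ 2) := by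
    rw [Finset.sum_mul]
    refine Finset.sum_congr rfl fun j _ => ?_
    rw [← Finset.mul_prod_erase Finset.univ _ (Finset.mem_univ j)]
    field_simp
    rw [div_eq_iff (hq j)]; ring
  simp only [Pp, eval_sub, eval_mul, eval_C, eval_finset_sum, eval_prod, Qp_eval]
  rw [sub_mul, mul_assoc, key, Finset.mul_sum]

lemma Pp_prod_natDegree (m : ℕ) (μ ξ : Fin m → ℝ) :
    (∏ j, Qp (μ j) (ξ j)).natDegree = 2 * m := by
  rw [natDegree_prod _ _ (fun j _ => (Qp_monic (μ j) (ξ j)).ne_zero)]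
  simp [Qp_natDegree, Finset.sum_const, Finset.card_univ, mul_comm]

lemma Pp_sum_natDegree_le (m : ℕ) (μ ξ : Fin m → ℝ) (j : Fin m) :
    (C (ξ j) * ∏ k ∈ Finset.univ.erase j, Qp (μ k) (ξ k)).natDegree ≤ 2 * (m - 1) := by
  refine natDegree_mul_le.trans ?_
  rw [natDegree_C, zero_add]
  refine (natDegree_prod_le _ _).trans (le_of_eq ?_)
  calc ∑ k ∈ Finset.univ.erase j, (Qp (μ k) (ξ k)).natDegree
      = ∑ k ∈ Finset.univ.erase j, 2 := by
        exact Finset.sum_congr rfl fun k _ => Qp_natDegree _ _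
    _ = 2 * (m - 1) := by
        rw [Finset.sum_const, Finset.card_erase_of_mem (Finset.mem_univ j),
          Finset.card_univ, Fintype.card_fin, smul_eq_mul, mul_comm]

lemma Pp_coeff (m : ℕ) (μ ξ : Fin m → ℝ) (ω : ℝ) :
    (Pp m μ ξ ω).coeff (2 * m) = -ω := by
  have hS : (∑ j, C (ξ j) * ∏ k ∈ Finset.univ.erase j, Qp (μ k) (ξ k)).coeff (2 * m) = 0 := by
    rcases Nat.eq_zero_or_pos m with rfl | hm
    · simp
    · rw [Polynomial.finset_sum_coeff]
      refine Finset.sum_eq_zero fun j _ => ?_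
      apply coeff_eq_zero_of_natDegree_lt
      calc (C (ξ j) * ∏ k ∈ Finset.univ.erase j, Qp (μ k) (ξ k)).natDegree
          ≤ 2 * (m - 1) := Pp_sum_natDegree_le m μ ξ j
        _ < 2 * m := by omega
  have hPi : (∏ j, Qp (μ j) (ξ j)).coeff (2 * m) = 1 := by
    have hmonic : (∏ j, Qp (μ j) (ξ j)).Monic :=
      monic_prod_of_monic _ _ fun j _ => Qp_monic _ _
    have := hmonic.coeff_natDegree
    rwa [Pp_prod_natDegree] at this
  simp only [Pp, coeff_sub, coeff_C_mul, hS, hPi]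
  ring

lemma Pp_ne_zero (m : ℕ) (μ ξ : Fin m → ℝ) {ω : ℝ} (hω : ω ≠ 0) : Pp m μ ξ ω ≠ 0 := by
  intro h
  have := Pp_coeff m μ ξ ω
  rw [h] at this
  simp at this
  exact hω this

lemma Pp_natDegree_le (m : ℕ) (μ ξ : Fin m → ℝ) (ω : ℝ) : (Pp m μ ξ ω).natDegree ≤ 2 * m := by
  refine (natDegree_sub_le _ _).trans (sup_le ?_ ?_)
  · refine natDegree_mul_le.trans ?_
    rw [natDegree_C, zero_add]
    refine natDegree_sum_le_of_forall_le _ _ fun j _ => ?_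
    exact (Pp_sum_natDegree_le m μ ξ j).trans (by omega)
  · refine natDegree_mul_le.trans ?_
    rw [natDegree_C, zero_add, Pp_prod_natDegree]

lemma roots_subset {P : ℝ[X]} (hP : P ≠ 0) {N : ℕ} (hdeg : P.natDegree ≤ N)
    (y : Fin N → ℝ) (hy : Function.Injective y) (hroot : ∀ j, P.eval (y j) = 0) :
    ∀ x : ℝ, P.eval x = 0 → ∃ j, x = y j := by
  intro x hx
  have hsub : Finset.image y Finset.univ ⊆ P.roots.toFinset := by
    intro z hz
    simp only [Finset.mem_image, Finset.mem_univ, true_and] at hz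
    obtain ⟨j, rfl⟩ := hz
    simp [Multiset.mem_toFinset, mem_roots hP, IsRoot, hroot j]
  have hcard : P.roots.toFinset.card ≤ N :=
    le_trans (Multiset.toFinset_card_le _) (le_trans (P.card_roots') hdeg)
  have heq : Finset.image y Finset.univ = P.roots.toFinset := by
    apply Finset.eq_of_subset_of_card_le hsub
    rwa [Finset.card_image_of_injective _ hy, Finset.card_univ, Fintype.card_fin]
  have hxmem : x ∈ P.roots.toFinset := by
    simp [Multiset.mem_toFinset, mem_roots hP, IsRoot, hx]
  rw [← heq] at hxmem
  simp only [Finset.mem_image, Finset.mem_univ, true_and] at hxmem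
  obtain ⟨j, hj⟩ := hxmem
  exact ⟨j, hj.symm⟩

lemma hasDerivAt_arctan_affine (μ ξ : ℝ) (hξ : ξ ≠ 0) (x : ℝ) :
    HasDerivAt (fun t => Real.arctan ((t - μ) / ξ)) (ξ / ((x - μ) ^ 2 + ξ ^ 2)) x := by
  have h1 : HasDerivAt (fun t : ℝ => (t - μ) / ξ) (1 / ξ) x := by
    simpa using ((hasDerivAt_id x).sub_const μ).div_const ξ
  have h2 := (Real.hasDerivAt_arctan ((x - μ) / ξ)).comp x h1
  refine h2.congr_deriv ?_
  have hden : (x - μ) ^ 2 + ξ ^ 2 ≠ 0 := by positivity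
  field_simp
  ring


end BestApproxAux

end Aux

open BestApproxAux Set

/-- For the unitary best approximation `r ∈ 𝒰_n` with unique phase function
`g` and equioscillation points `−1 = η₁ < ⋯ < η_{2n+2} = 1`: the approximation error is
maximal exactly at the equioscillation points (as is the phase error), the phase error is
strictly monotonic between neighboring equioscillation points, and between each pair of
neighboring equioscillation points the phase error has exactly one zero, which is simple
and at which `r` interpolates the exponential. -/

theorem best_approximation_interpolation (n : ℕ) (ω : ℝ)
    (hω : 0 < ω) (hω' : ω < ((n : ℝ) + 1) * Real.pi)
    (r : RatFunc ℂ) (hr : r ∈ unitaryClass n)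
    (hbest : ∀ u ∈ unitaryClass n, errNorm ω r ≤ errNorm ω u)
    (g : ℝ → ℝ) (hg : IsPhaseFun n r g) (hgb : phaseErrSup ω g < Real.pi)
    (η : Fin (2 * n + 1 + 1) → ℝ) (hη : StrictMono η)
    (hη0 : η 0 = -1) (hη1 : η (Fin.last (2 * n + 1)) = 1)
    (halt : ∃ ε : ℝ, (ε = 1 ∨ ε = -1) ∧
      ∀ j : Fin (2 * n + 1 + 1),
        g (η j) - ω * η j = ε * (-1 : ℝ) ^ (j : ℕ) * phaseErrSup ω g) :
    (∀ j : Fin (2 * n + 1 + 1),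
      ‖ieval r (η j) - Complex.exp (Complex.I * ω * (η j : ℝ))‖ = errNorm ω r) ∧
    ({x | x ∈ Set.Icc (-1 : ℝ) 1 ∧
        ‖ieval r x - Complex.exp (Complex.I * ω * x)‖ = errNorm ω r} =
      Set.range η) ∧
    ({x | x ∈ Set.Icc (-1 : ℝ) 1 ∧ |g x - ω * x| = phaseErrSup ω g} = Set.range η) ∧
    (∀ j : Fin (2 * n + 1),
      StrictMonoOn (fun t => g t - ω * t) (Set.Icc (η j.castSucc) (η j.succ)) ∨
      StrictAntiOn (fun t => g t - ω * t) (Set.Icc (η j.castSucc) (η j.succ))) ∧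
    (∀ j : Fin (2 * n + 1),
      ∃! x : ℝ, x ∈ Set.Ioo (η j.castSucc) (η j.succ) ∧ g x - ω * x = 0) ∧
    (∀ j : Fin (2 * n + 1), ∀ x ∈ Set.Ioo (η j.castSucc) (η j.succ), g x - ω * x = 0 →
      deriv (fun t => g t - ω * t) x ≠ 0 ∧
      ieval r x = Complex.exp (Complex.I * ω * x)) := by
  classical
  obtain ⟨m, θ, μ, ξ, hm, hξ, -, hgf, hiev⟩ := hg
  have hgeq : g = fun x => θ + 2 * ∑ j, Real.arctan ((x - μ j) / ξ j) := funext hgf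
  subst hgeq
  set g : ℝ → ℝ := fun x => θ + 2 * ∑ j, Real.arctan ((x - μ j) / ξ j) with hgdef
  set e : ℝ → ℝ := fun t => g t - ω * t with hedef
  set M := phaseErrSup ω g with hMdef
  set Ed : ℝ → ℝ := fun x => 2 * ∑ j, ξ j / ((x - μ j) ^ 2 + ξ j ^ 2) - ω with hEdef
  obtain ⟨ε, hε, heq⟩ := halt
  -- basic facts about η
  have hηmem : ∀ k, η k ∈ Icc (-1 : ℝ) 1 := fun k =>
    ⟨hη0 ▸ hη.monotone (Fin.zero_le k), hη1 ▸ hη.monotone (Fin.le_last k)⟩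
  -- derivative of the phase error
  have hder : ∀ x : ℝ, HasDerivAt e (Ed x) x := by
    intro x
    have h1 : HasDerivAt (fun t => ∑ j, Real.arctan ((t - μ j) / ξ j))
        (∑ j, ξ j / ((x - μ j) ^ 2 + ξ j ^ 2)) x :=
      HasDerivAt.fun_sum fun j _ => hasDerivAt_arctan_affine (μ j) (ξ j) (hξ j) x
    have h2 := ((h1.const_mul 2).const_add θ).fun_sub ((hasDerivAt_id x).const_mul ω)
    simpa [hedef, hgdef, hEdef] using h2
  have hconte : Continuous e := continuous_iff_continuousAt.2 fun x => (hder x).continuousAt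
  have hcontEd : Continuous Ed := by
    apply Continuous.sub _ continuous_const
    apply Continuous.mul continuous_const
    apply continuous_finset_sum
    intro j _
    apply Continuous.div continuous_const (by continuity)
    intro x
    have := hξ j
    positivity
  -- M is the attained maximum of |e| on [-1,1]
  have hIccne : (Icc (-1 : ℝ) 1).Nonempty := nonempty_Icc.mpr (by norm_num)
  obtain ⟨x₀, hx₀K, hx₀max⟩ := isCompact_Icc.exists_isMaxOn hIccne hconte.abs.continuousOn
  have hMgr : IsGreatest ((fun x : ℝ => |e x|) '' Icc (-1 : ℝ) 1) (|e x₀|) :=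
    ⟨mem_image_of_mem _ hx₀K, by rintro y ⟨z, hz, rfl⟩; exact hx₀max hz⟩
  have hMeq : M = |e x₀| := by
    rw [hMdef]
    show phaseErrSup ω g = |e x₀|
    have : phaseErrSup ω g = sSup ((fun x : ℝ => |e x|) '' Icc (-1 : ℝ) 1) := rfl
    rw [this]
    exact hMgr.csSup_eq
  have hub : ∀ x ∈ Icc (-1 : ℝ) 1, |e x| ≤ M := fun x hx => hMeq ▸ hx₀max hx
  have hM0 : 0 ≤ M := hMeq ▸ abs_nonneg _
  have hMπ : M < Real.pi := hgb
  -- sign bookkeeping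
  have hδ : ∀ k : ℕ, ε * (-1 : ℝ) ^ k = 1 ∨ ε * (-1 : ℝ) ^ k = -1 := by
    intro k
    rcases Nat.even_or_odd k with h | h
    · rw [h.neg_one_pow, mul_one]; exact hε
    · rw [h.neg_one_pow, mul_neg_one]
      rcases hε with rfl | rfl
      · right; norm_num
      · left; norm_num
  have heq' : ∀ j : Fin (2 * n + 1 + 1), e (η j) = ε * (-1 : ℝ) ^ (j : ℕ) * M := fun j => heq j
  have habsη : ∀ j : Fin (2 * n + 1 + 1), |e (η j)| = M := by
    intro j
    rw [heq' j]
    rcases hδ (j : ℕ) with h | h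
    · rw [h, one_mul, abs_of_nonneg hM0]
    · rw [h, neg_one_mul, abs_neg, abs_of_nonneg hM0]
  -- the polynomial controlling zeros of Ed
  have hDpos : ∀ x : ℝ, 0 < ∏ j, ((x - μ j) ^ 2 + ξ j ^ 2) := by
    intro x
    apply Finset.prod_pos
    intro j _
    have := hξ j
    positivity
  have hPE : ∀ x : ℝ, (Pp m μ ξ ω).eval x = Ed x * ∏ j, ((x - μ j) ^ 2 + ξ j ^ 2) :=
    fun x => Pp_eval m μ ξ ω hξ x
  have hEdP : ∀ x : ℝ, Ed x = 0 ↔ (Pp m μ ξ ω).eval x = 0 := by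
    intro x
    rw [hPE x]
    constructor
    · intro h; rw [h, zero_mul]
    · intro h
      rcases mul_eq_zero.mp h with h | h
      · exact h
      · exact absurd h (hDpos x).ne'
  -- M is positive
  have hMpos : 0 < M := by
    rcases lt_or_eq_of_le hM0 with h | h
    · exact h
    · exfalso
      have hzero : ∀ x ∈ Icc (-1 : ℝ) 1, e x = 0 := by
        intro x hx
        have := hub x hx
        rw [← h] at this
        exact abs_eq_zero.mp (le_antisymm this (abs_nonneg _))
      have hroots : ∀ x ∈ Ioo (-1 : ℝ) 1, (Pp m μ ξ ω).IsRoot x := by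
        intro x hx
        have hev : e =ᶠ[nhds x] (fun _ => (0 : ℝ)) := by
          filter_upwards [isOpen_Ioo.mem_nhds hx] with y hy
          exact hzero y (Ioo_subset_Icc_self hy)
        have hd : deriv e x = 0 := by
          rw [hev.deriv_eq]; simp
        rw [(hder x).deriv] at hd
        exact (hEdP x).mp hd
      have hinf : {x : ℝ | (Pp m μ ξ ω).IsRoot x}.Infinite := by
        apply Set.Infinite.mono (fun x hx => hroots x hx)
        exact Set.Ioo_infinite (show (-1:ℝ) < 1 by norm_num)
      exact Pp_ne_zero m μ ξ hω.ne' (Polynomial.eq_zero_of_infinite_isRoot _ hinf)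
  -- interior equioscillation points are critical points
  have hEdη : ∀ j : Fin (2 * n + 1 + 1), 0 < (j : ℕ) → (j : ℕ) < 2 * n + 1 → Ed (η j) = 0 := by
    intro j hj0 hj1
    have hmemo : η j ∈ Ioo (-1 : ℝ) 1 := by
      constructor
      · rw [← hη0]; exact hη (show (0 : Fin (2 * n + 1 + 1)) < j by
          rw [Fin.lt_def]; simpa using hj0)
      · rw [← hη1]; exact hη (show j < Fin.last (2 * n + 1) by
          rw [Fin.lt_def]; simpa using hj1)
    rcases hδ (j : ℕ) with h | h
    · -- local max
      have hval : e (η j) = M := by rw [heq' j, h, one_mul]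
      have hloc : IsLocalMax e (η j) := by
        filter_upwards [isOpen_Ioo.mem_nhds hmemo] with y hy
        calc e y ≤ |e y| := le_abs_self _
          _ ≤ M := hub y (Ioo_subset_Icc_self hy)
          _ = e (η j) := hval.symm
      exact hloc.hasDerivAt_eq_zero (hder _)
    · -- local min
      have hval : e (η j) = -M := by rw [heq' j, h, neg_one_mul]
      have hloc : IsLocalMin e (η j) := by
        filter_upwards [isOpen_Ioo.mem_nhds hmemo] with y hy
        calc e (η j) = -M := hval
          _ ≤ -|e y| := neg_le_neg (hub y (Ioo_subset_Icc_self hy))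
          _ ≤ e y := neg_abs_le _
      exact hloc.hasDerivAt_eq_zero (hder _)
  -- classification of all zeros of Ed
  have hclass : ∀ x : ℝ, Ed x = 0 → ∃ k : Fin (2 * n + 1 + 1), x = η k := by
    have hyinj : Function.Injective (fun k : Fin (2 * n) =>
        η ⟨(k : ℕ) + 1, by omega⟩) := by
      intro a b hab
      have := hη.injective hab
      have hval : (a : ℕ) + 1 = (b : ℕ) + 1 := congrArg Fin.val this
      exact Fin.ext (by omega)
    have hyroot : ∀ k : Fin (2 * n),
        (Pp m μ ξ ω).eval ((fun k : Fin (2 * n) => η ⟨(k : ℕ) + 1, by omega⟩) k) = 0 := by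
      intro k
      apply (hEdP _).mp
      exact hEdη ⟨(k : ℕ) + 1, by omega⟩ (by simp) (by simpa using k.isLt)
    have hdeg : (Pp m μ ξ ω).natDegree ≤ 2 * n :=
      (Pp_natDegree_le m μ ξ ω).trans (by omega)
    intro x hx
    obtain ⟨k, hk⟩ := roots_subset (Pp_ne_zero m μ ξ hω.ne') hdeg _ hyinj hyroot x
      ((hEdP x).mp hx)
    exact ⟨⟨(k : ℕ) + 1, by omega⟩, hk⟩
  have hnotzero : ∀ x : ℝ, (∀ k : Fin (2 * n + 1 + 1), x ≠ η k) → Ed x ≠ 0 := by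
    intro x hx h
    obtain ⟨k, hk⟩ := hclass x h
    exact hx k hk
  -- points strictly between neighbors are not equioscillation points
  have hbetween : ∀ (j : Fin (2 * n + 1)) (x : ℝ), x ∈ Ioo (η j.castSucc) (η j.succ) →
      ∀ k : Fin (2 * n + 1 + 1), x ≠ η k := by
    intro j x hx k hk
    rcases le_or_gt k j.castSucc with h | h
    · have h1 : η k ≤ η j.castSucc := hη.monotone h
      rw [← hk] at h1
      exact absurd hx.1 (not_lt.mpr h1)
    · have h2 : j.succ ≤ k := Fin.castSucc_lt_iff_succ_le.mp h
      have h1 : η j.succ ≤ η k := hη.monotone h2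
      rw [← hk] at h1
      exact absurd hx.2 (not_lt.mpr h1)
  -- strict monotonicity between neighbors
  have hmono : ∀ j : Fin (2 * n + 1),
      StrictMonoOn e (Icc (η j.castSucc) (η j.succ)) ∨
      StrictAntiOn e (Icc (η j.castSucc) (η j.succ)) := by
    intro j
    have hEne : ∀ x ∈ Ioo (η j.castSucc) (η j.succ), Ed x ≠ 0 :=
      fun x hx => hnotzero x (hbetween j x hx)
    by_cases hcase : ∃ x ∈ Ioo (η j.castSucc) (η j.succ), Ed x < 0
    · right
      obtain ⟨z₀, hz₀, hz₀neg⟩ := hcase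
      have hall : ∀ x ∈ Ioo (η j.castSucc) (η j.succ), Ed x < 0 := by
        intro x hx
        rcases lt_or_gt_of_ne (hEne x hx) with h | h
        · exact h
        · exfalso
          have h0 : (0 : ℝ) ∈ uIcc (Ed z₀) (Ed x) :=
            mem_uIcc.mpr (Or.inl ⟨hz₀neg.le, h.le⟩)
          obtain ⟨c, hcmem, hc0⟩ := intermediate_value_uIcc hcontEd.continuousOn h0
          exact hEne c (Set.ordConnected_Ioo.uIcc_subset hz₀ hx hcmem) hc0
      refine strictAntiOn_of_deriv_neg (convex_Icc _ _) hconte.continuousOn ?_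
      intro x hx
      rw [interior_Icc] at hx
      rw [(hder x).deriv]
      exact hall x hx
    · left
      push_neg at hcase
      refine strictMonoOn_of_deriv_pos (convex_Icc _ _) hconte.continuousOn ?_
      intro x hx
      rw [interior_Icc] at hx
      rw [(hder x).deriv]
      exact lt_of_le_of_ne (hcase x hx) (Ne.symm (hEne x hx))
  -- endpoint values
  have hva : ∀ j : Fin (2 * n + 1), e (η j.castSucc) = ε * (-1 : ℝ) ^ (j : ℕ) * M := by
    intro j
    have := heq' j.castSucc
    rwa [Fin.coe_castSucc] at this
  have hvb : ∀ j : Fin (2 * n + 1), e (η j.succ) = -(ε * (-1 : ℝ) ^ (j : ℕ) * M) := by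
    intro j
    have h := heq' j.succ
    rw [Fin.val_succ, pow_succ] at h
    rw [h]; ring
  have hsign : ∀ j : Fin (2 * n + 1),
      (e (η j.castSucc) = -M ∧ e (η j.succ) = M) ∨
      (e (η j.castSucc) = M ∧ e (η j.succ) = -M) := by
    intro j
    rcases hδ (j : ℕ) with h | h
    · right
      constructor
      · rw [hva j, h, one_mul]
      · rw [hvb j, h, one_mul]
    · left
      constructor
      · rw [hva j, h, neg_one_mul]
      · rw [hvb j, h, neg_one_mul, neg_neg]
  have hab : ∀ j : Fin (2 * n + 1), η j.castSucc < η j.succ :=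
    fun j => hη (Fin.castSucc_lt_succ (i := j))
  -- resolved sign per monotonicity case
  have hmono' : ∀ j : Fin (2 * n + 1),
      (StrictMonoOn e (Icc (η j.castSucc) (η j.succ)) ∧
        e (η j.castSucc) = -M ∧ e (η j.succ) = M) ∨
      (StrictAntiOn e (Icc (η j.castSucc) (η j.succ)) ∧
        e (η j.castSucc) = M ∧ e (η j.succ) = -M) := by
    intro j
    have haI : η j.castSucc ∈ Icc (η j.castSucc) (η j.succ) :=
      ⟨le_refl _, (hab j).le⟩
    have hbI : η j.succ ∈ Icc (η j.castSucc) (η j.succ) :=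
      ⟨(hab j).le, le_refl _⟩
    rcases hmono j with hm' | hm'
    · left
      refine ⟨hm', ?_⟩
      rcases hsign j with h | h
      · exact h
      · exfalso
        have := hm' haI hbI (hab j)
        rw [h.1, h.2] at this
        linarith
    · right
      refine ⟨hm', ?_⟩
      rcases hsign j with h | h
      · exfalso
        have := hm' haI hbI (hab j)
        rw [h.1, h.2] at this
        linarith
      · exact h
  -- locating points not in the range of η
  have hlocate : ∀ x ∈ Icc (-1 : ℝ) 1, x ∉ Set.range η →
      ∃ j : Fin (2 * n + 1), x ∈ Ioo (η j.castSucc) (η j.succ) := by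
    intro x hx hxr
    have hne : ∀ k, x ≠ η k := fun k h => hxr ⟨k, h.symm⟩
    have hx0 : η 0 < x := lt_of_le_of_ne (hη0 ▸ hx.1) (Ne.symm (hne 0))
    have hSne : (Finset.univ.filter (fun k => η k < x)).Nonempty := ⟨0, by simp [hx0]⟩
    obtain ⟨k₀, hk₀mem, hk₀max⟩ :
        ∃ k₀ ∈ Finset.univ.filter (fun k : Fin (2 * n + 1 + 1) => η k < x),
          ∀ k ∈ Finset.univ.filter (fun k : Fin (2 * n + 1 + 1) => η k < x), k ≤ k₀ :=
      ⟨_, Finset.max'_mem _ hSne, fun k hk => Finset.le_max' _ k hk⟩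
    have hk₀lt : η k₀ < x := (Finset.mem_filter.mp hk₀mem).2
    have hk₀val : (k₀ : ℕ) < 2 * n + 1 := by
      by_contra hcon
      have hlast : k₀ = Fin.last (2 * n + 1) := by
        apply Fin.ext
        have := k₀.isLt
        simp only [Fin.val_last]
        omega
      rw [hlast, hη1] at hk₀lt
      exact absurd hx.2 (not_le.mpr hk₀lt)
    refine ⟨⟨(k₀ : ℕ), hk₀val⟩, ?_, ?_⟩
    · have hcs : (⟨(k₀ : ℕ), hk₀val⟩ : Fin (2 * n + 1)).castSucc = k₀ :=
        Fin.ext (by simp)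
      rw [hcs]
      exact hk₀lt
    · have hsuccval : (((⟨(k₀ : ℕ), hk₀val⟩ : Fin (2 * n + 1)).succ : Fin (2 * n + 1 + 1)) : ℕ)
        = (k₀ : ℕ) + 1 := rfl
      have hnotin : ¬ η ((⟨(k₀ : ℕ), hk₀val⟩ : Fin (2 * n + 1)).succ) < x := by
        intro hlt
        have hmem2 : (⟨(k₀ : ℕ), hk₀val⟩ : Fin (2 * n + 1)).succ ∈
            Finset.univ.filter (fun k : Fin (2 * n + 1 + 1) => η k < x) :=
          Finset.mem_filter.mpr ⟨Finset.mem_univ _, hlt⟩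
        have hle' := hk₀max _ hmem2
        have hle : (((⟨(k₀ : ℕ), hk₀val⟩ : Fin (2 * n + 1)).succ : Fin (2 * n + 1 + 1)) : ℕ)
            ≤ (k₀ : ℕ) := hle'
        rw [hsuccval] at hle
        omega
      exact lt_of_le_of_ne (not_lt.mp hnotin) (hne _)
  -- phase maximizer characterization
  have hmax_iff : ∀ x ∈ Icc (-1 : ℝ) 1, (|e x| = M ↔ x ∈ Set.range η) := by
    intro x hx
    constructor
    · intro hmax
      by_contra hxr
      obtain ⟨j, hxj⟩ := hlocate x hx hxr
      have hxI : x ∈ Icc (η j.castSucc) (η j.succ) := Ioo_subset_Icc_self hxj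
      have haI : η j.castSucc ∈ Icc (η j.castSucc) (η j.succ) := ⟨le_refl _, (hab j).le⟩
      have hbI : η j.succ ∈ Icc (η j.castSucc) (η j.succ) := ⟨(hab j).le, le_refl _⟩
      have hlt : |e x| < M := by
        rcases hmono' j with ⟨hm', h1, h2⟩ | ⟨hm', h1, h2⟩
        · have l1 : e (η j.castSucc) < e x := hm' haI hxI hxj.1
          have l2 : e x < e (η j.succ) := hm' hxI hbI hxj.2
          rw [h1] at l1; rw [h2] at l2
          exact abs_lt.mpr ⟨l1, l2⟩
        · have l1 : e x < e (η j.castSucc) := hm' haI hxI hxj.1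
          have l2 : e (η j.succ) < e x := hm' hxI hbI hxj.2
          rw [h1] at l1; rw [h2] at l2
          exact abs_lt.mpr ⟨l2, l1⟩
      exact absurd hmax hlt.ne
    · rintro ⟨k, rfl⟩
      exact habsη k
  -- the pointwise error formula
  have herr : ∀ x ∈ Icc (-1 : ℝ) 1,
      ‖ieval r x - Complex.exp (Complex.I * ω * x)‖ =
        2 * Real.sin (|e x| / 2) := by
    intro x hx
    have h2 : (Complex.I * (ω : ℂ) * (x : ℂ)) = Complex.I * ((ω * x : ℝ) : ℂ) := by
      push_cast; ring
    rw [hiev x, h2, abs_exp_sub_exp (g x) (ω * x)]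
    have hgx : g x - ω * x = e x := rfl
    rw [hgx]
    have hle : |e x| ≤ M := hub x hx
    congr 1
    rcases le_or_gt 0 (e x) with h | h
    · rw [abs_of_nonneg h, abs_of_nonneg]
      apply Real.sin_nonneg_of_nonneg_of_le_pi
      · linarith
      · have : e x ≤ M := le_trans (le_abs_self _) hle
        linarith [Real.pi_pos]
    · rw [abs_of_neg h]
      have hs : Real.sin (e x / 2) < 0 := by
        apply Real.sin_neg_of_neg_of_neg_pi_lt
        · linarith
        · have : -M ≤ e x := neg_le_of_abs_le hle
          linarith [Real.pi_pos]
      rw [abs_of_neg hs, neg_div, Real.sin_neg]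
  -- the error norm
  have hmemS : ∀ y, y ∈ Icc (-(Real.pi / 2)) (Real.pi / 2) →
      True := fun _ _ => trivial
  have hsinmem : ∀ x ∈ Icc (-1 : ℝ) 1, |e x| / 2 ∈ Icc (-(Real.pi / 2)) (Real.pi / 2) := by
    intro x hx
    constructor
    · have := abs_nonneg (e x); linarith [Real.pi_pos]
    · have := hub x hx; linarith
  have hMmem : M / 2 ∈ Icc (-(Real.pi / 2)) (Real.pi / 2) := by
    constructor
    · linarith [Real.pi_pos]
    · linarith
  have hEN : errNorm ω r = 2 * Real.sin (M / 2) := by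
    show sSup ((fun x : ℝ => ‖ieval r x - Complex.exp (Complex.I * ω * x)‖) ''
      Icc (-1 : ℝ) 1) = 2 * Real.sin (M / 2)
    apply IsGreatest.csSup_eq
    constructor
    · refine ⟨η 0, hηmem 0, ?_⟩
      show ‖ieval r (η 0) - Complex.exp (Complex.I * ω * (η 0 : ℝ))‖
        = 2 * Real.sin (M / 2)
      rw [herr _ (hηmem 0), habsη 0]
    · rintro y ⟨x, hx, rfl⟩
      show ‖ieval r x - Complex.exp (Complex.I * ω * (x : ℝ))‖
        ≤ 2 * Real.sin (M / 2)
      rw [herr x hx]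
      have hsle : Real.sin (|e x| / 2) ≤ Real.sin (M / 2) := by
        apply Real.strictMonoOn_sin.monotoneOn (hsinmem x hx) hMmem
        have := hub x hx; linarith
      linarith
  have herr_iff : ∀ x ∈ Icc (-1 : ℝ) 1,
      (‖ieval r x - Complex.exp (Complex.I * ω * x)‖ = errNorm ω r ↔
        |e x| = M) := by
    intro x hx
    rw [herr x hx, hEN]
    constructor
    · intro h
      have hs : Real.sin (|e x| / 2) = Real.sin (M / 2) := by linarith
      have := Real.strictMonoOn_sin.injOn (hsinmem x hx) hMmem hs
      linarith
    · intro h; rw [h]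
  refine ⟨?_, ?_, ?_, ?_, ?_, ?_⟩
  · -- goal 1
    intro j
    exact (herr_iff (η j) (hηmem j)).mpr (habsη j)
  · -- goal 2
    ext x
    simp only [Set.mem_setOf_eq]
    constructor
    · rintro ⟨hx, h⟩
      exact (hmax_iff x hx).mp ((herr_iff x hx).mp h)
    · rintro ⟨k, rfl⟩
      exact ⟨hηmem k, (herr_iff _ (hηmem k)).mpr (habsη k)⟩
  · -- goal 3
    ext x
    simp only [Set.mem_setOf_eq]
    constructor
    · rintro ⟨hx, h⟩
      exact (hmax_iff x hx).mp h
    · rintro ⟨k, rfl⟩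
      exact ⟨hηmem k, habsη k⟩
  · -- goal 4
    exact hmono
  · -- goal 5
    intro j
    rcases hmono' j with ⟨hm', h1, h2⟩ | ⟨hm', h1, h2⟩
    · have h0 : (0 : ℝ) ∈ Ioo (e (η j.castSucc)) (e (η j.succ)) := by
        rw [h1, h2]; exact ⟨neg_lt_zero.mpr hMpos, hMpos⟩
      obtain ⟨x, hxI, hx0⟩ := intermediate_value_Ioo (hab j).le hconte.continuousOn h0
      refine ⟨x, ⟨hxI, hx0⟩, ?_⟩
      rintro y ⟨hyI, hy0⟩
      apply hm'.injOn (Ioo_subset_Icc_self hyI) (Ioo_subset_Icc_self hxI)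
      show e y = e x
      exact hy0.trans hx0.symm
    · have h0 : (0 : ℝ) ∈ Ioo (e (η j.succ)) (e (η j.castSucc)) := by
        rw [h1, h2]; exact ⟨neg_lt_zero.mpr hMpos, hMpos⟩
      obtain ⟨x, hxI, hx0⟩ := intermediate_value_Ioo' (hab j).le hconte.continuousOn h0
      refine ⟨x, ⟨hxI, hx0⟩, ?_⟩
      rintro y ⟨hyI, hy0⟩
      apply hm'.injOn (Ioo_subset_Icc_self hyI) (Ioo_subset_Icc_self hxI)
      show e y = e x
      exact hy0.trans hx0.symm
  · -- goal 6
    intro j x hxI hx0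
    constructor
    · rw [(hder x).deriv]
      exact hnotzero x (hbetween j x hxI)
    · rw [hiev x]
      have hgx : g x = ω * x := by
        have : e x = 0 := hx0
        have := this
        simp only [hedef] at this
        linarith [this]
      rw [hgx]
      congr 1
      push_cast
      ring
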